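/- arXiv:math/0010297 — 2 statements merged into one kernel-verified Lean document; each statement's English description precedes it below -/
import Mathlib

section
/- Let f : ℝ₋ⁿ → ℝ be an indicator profile and assume in addition that there exists A > 0 such that f(t) ≥ A·max_{1≤k≤n} t_k for all t ∈ ℝ₋ⁿ. Let S = {t ∈ ℝ₋ⁿ : f(t) ≤ −1} and let E be the set of extreme points of the convex set S. Then for every a ∈ ℝ₊ⁿ one has sup_{t∈L} ⟨a,t⟩ = sup_{t∈E} ⟨a,t⟩, where L = {t ∈ ℝ₋ⁿ : f(t) = −1}; consequently Γ_L = Γ_E and Θ_L = Θ_E. (This is the key identity in the proof of Proposition 3 of the paper.) -/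
open Set

/-- The negative orthant `ℝ₋ⁿ = (−∞,0)ⁿ`. -/
def negOrth (n : ℕ) : Set (Fin n → ℝ) := {t | ∀ i, t i < 0}

/-- The standard inner product `⟨a, t⟩ = ∑ aᵢ tᵢ` on `ℝⁿ`. -/
def dotp {n : ℕ} (a t : Fin n → ℝ) : ℝ := ∑ i, a i * t i

/-- An indicator profile: convex, nonpositive, nondecreasing in each variable,
and positively homogeneous on the negative orthant. -/
def IsIndicatorProfile {n : ℕ} (f : (Fin n → ℝ) → ℝ) : Prop :=
  ConvexOn ℝ (negOrth n) f ∧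
  (∀ t ∈ negOrth n, f t ≤ 0) ∧
  (∀ s ∈ negOrth n, ∀ t ∈ negOrth n, (∀ i, s i ≤ t i) → f s ≤ f t) ∧
  (∀ c : ℝ, 0 < c → ∀ t ∈ negOrth n, f (c • t) = c * f t)

/-- The level set `L = {t ∈ ℝ₋ⁿ : f(t) = −1}`. -/
def levelL {n : ℕ} (f : (Fin n → ℝ) → ℝ) : Set (Fin n → ℝ) :=
  {t ∈ negOrth n | f t = -1}

/-- `Γ_F = {a ∈ ℝ₊ⁿ : sup_{t∈F} ⟨a,t⟩ = sup_{t∈L} ⟨a,t⟩ = −1}`. -/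
def GammaSet {n : ℕ} (f : (Fin n → ℝ) → ℝ) (F : Set (Fin n → ℝ)) :
    Set (Fin n → ℝ) :=
  {a | (∀ i, 0 ≤ a i) ∧ sSup ((fun t => dotp a t) '' F) = -1 ∧
    sSup ((fun t => dotp a t) '' levelL f) = -1}

/-- `Θ_F = {λa : 0 ≤ λ ≤ 1, a ∈ Γ_F}`. -/
def ThetaSet {n : ℕ} (f : (Fin n → ℝ) → ℝ) (F : Set (Fin n → ℝ)) :
    Set (Fin n → ℝ) :=
  {x | ∃ l : ℝ, 0 ≤ l ∧ l ≤ 1 ∧ ∃ a ∈ GammaSet f F, x = l • a}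



section aux
variable {n : ℕ}

lemma dotp_add (b u v : Fin n → ℝ) : dotp b (u + v) = dotp b u + dotp b v := by
  simp [dotp, mul_add, Finset.sum_add_distrib]

lemma dotp_sub (b u v : Fin n → ℝ) : dotp b (u - v) = dotp b u - dotp b v := by
  simp [dotp, mul_sub, Finset.sum_sub_distrib]

lemma dotp_smul (b : Fin n → ℝ) (r : ℝ) (u : Fin n → ℝ) : dotp b (r • u) = r * dotp b u := by
  simp [dotp, Finset.mul_sum]; exact Finset.sum_congr rfl fun i _ => by ring

lemma dotp_combo (b : Fin n → ℝ) (θ₁ θ₂ : ℝ) (u v : Fin n → ℝ) :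
    dotp b (θ₁ • u + θ₂ • v) = θ₁ * dotp b u + θ₂ * dotp b v := by
  rw [dotp_add, dotp_smul, dotp_smul]

lemma dotp_self_nonneg (u : Fin n → ℝ) : 0 ≤ dotp u u :=
  Finset.sum_nonneg fun i _ => mul_self_nonneg _

lemma dotp_self_eq_zero {u : Fin n → ℝ} (h : dotp u u = 0) : u = 0 := by
  funext i
  have h2 := (Finset.sum_eq_zero_iff_of_nonneg (fun j _ => mul_self_nonneg (u j))).1 h i
    (Finset.mem_univ i)
  simpa using mul_self_eq_zero.1 h2

lemma quad_id (θ₁ θ₂ : ℝ) (h : θ₁ + θ₂ = 1) (u v : Fin n → ℝ) :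
    dotp (θ₁ • u + θ₂ • v) (θ₁ • u + θ₂ • v)
      = θ₁ * dotp u u + θ₂ * dotp v v - θ₁ * θ₂ * dotp (u - v) (u - v) := by
  have h2 : θ₂ = 1 - θ₁ := by linarith
  subst h2
  simp only [dotp, Finset.mul_sum, ← Finset.sum_sub_distrib, ← Finset.sum_add_distrib]
  refine Finset.sum_congr rfl fun i _ => ?_
  simp only [Pi.add_apply, Pi.smul_apply, Pi.sub_apply, smul_eq_mul]
  ring

lemma dotp_nonpos {a t : Fin n → ℝ} (ha : ∀ i, 0 ≤ a i) (ht : ∀ i, t i < 0) : dotp a t ≤ 0 :=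
  Finset.sum_nonpos fun i _ => mul_nonpos_of_nonneg_of_nonpos (ha i) (ht i).le

lemma isOpen_negOrth : IsOpen (negOrth n) := by
  have : negOrth n = ⋂ i, {t : Fin n → ℝ | t i < 0} := by ext t; simp [negOrth]
  rw [this]
  exact isOpen_iInter_of_finite fun i => isOpen_lt (continuous_apply i) continuous_const

lemma continuous_dotp (b : Fin n → ℝ) : Continuous fun s : Fin n → ℝ => dotp b s := by
  unfold dotp
  exact continuous_finset_sum _ fun i _ => continuous_const.mul (continuous_apply i)

lemma continuous_dotp_self : Continuous fun s : Fin n → ℝ => dotp s s := by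
  unfold dotp
  exact continuous_finset_sum _ fun i _ => (continuous_apply i).mul (continuous_apply i)

lemma coord_le {A : ℝ} (hA : 0 < A) {f : (Fin n → ℝ) → ℝ}
    (hcoer : ∀ t ∈ negOrth n, A * (⨆ i, t i) ≤ f t) {t : Fin n → ℝ}
    (ht : t ∈ negOrth n) (ht1 : f t ≤ -1) (i : Fin n) : t i ≤ -1 / A := by
  have h1 : A * (⨆ j, t j) ≤ -1 := le_trans (hcoer t ht) ht1
  have h3 : t i ≤ ⨆ j, t j := le_ciSup (Set.Finite.bddAbove (Set.finite_range t)) i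
  rw [le_div_iff₀ hA]
  nlinarith

lemma isClosed_S {f : (Fin n → ℝ) → ℝ} (hf : ConvexOn ℝ (negOrth n) f) {A : ℝ} (hA : 0 < A)
    (hcoer : ∀ t ∈ negOrth n, A * (⨆ i, t i) ≤ f t) :
    IsClosed {t ∈ negOrth n | f t ≤ -1} := by
  set S := {t ∈ negOrth n | f t ≤ -1} with hS
  have hbox : IsClosed {s : Fin n → ℝ | ∀ i, s i ≤ -1 / A} := by
    have : {s : Fin n → ℝ | ∀ i, s i ≤ -1/A} = ⋂ i, {s : Fin n → ℝ | s i ≤ -1/A} := by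
      ext; simp
    rw [this]
    exact isClosed_iInter fun i => isClosed_le (continuous_apply i) continuous_const
  have hcont : ContinuousOn f (negOrth n) := hf.continuousOn isOpen_negOrth
  refine isClosed_of_closure_subset ?_
  intro s hs
  have hSsub : S ⊆ {s : Fin n → ℝ | ∀ i, s i ≤ -1/A} := fun t ht i =>
    coord_le hA hcoer ht.1 ht.2 i
  have h1 : ∀ i, s i ≤ -1/A := hbox.closure_subset_iff.2 hSsub hs
  have hmem : s ∈ negOrth n := by
    intro i
    have h2 : (0:ℝ) < 1/A := by positivity
    have := h1 i
    simp only [neg_div] at this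
    linarith
  have hca : ContinuousAt f s := hcont.continuousAt (isOpen_negOrth.mem_nhds hmem)
  have hne : (nhdsWithin s S).NeBot := mem_closure_iff_nhdsWithin_neBot.1 hs
  have hev : ∀ᶠ x in nhdsWithin s S, f x ≤ -1 :=
    Filter.eventually_of_mem self_mem_nhdsWithin (fun x hx => hx.2)
  exact ⟨hmem, le_of_tendsto (hca.tendsto.mono_left nhdsWithin_le_nhds) hev⟩

set_option maxHeartbeats 2000000 in
lemma key_lemma (hn : 1 ≤ n) {f : (Fin n → ℝ) → ℝ} (hf : IsIndicatorProfile f)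
    {A : ℝ} (hA : 0 < A) (hcoer : ∀ t ∈ negOrth n, A * (⨆ i, t i) ≤ f t)
    {a : Fin n → ℝ} (ha : ∀ i, 0 ≤ a i) {t₀ : Fin n → ℝ}
    (ht₀ : t₀ ∈ negOrth n) (ht₀1 : f t₀ ≤ -1) {δ : ℝ} (hδ : 0 < δ) :
    ∃ e ∈ Set.extremePoints ℝ {t ∈ negOrth n | f t ≤ -1}, dotp a t₀ - δ ≤ dotp a e := by
  haveI : Nonempty (Fin n) := ⟨⟨0, hn⟩⟩
  set S := {t ∈ negOrth n | f t ≤ -1} with hSdef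
  have hSconv : Convex ℝ S := hf.1.convex_le (-1)
  have hScl : IsClosed S := isClosed_S hf.1 hA hcoer
  -- choice of ε
  have hsum : ∑ i, t₀ i < 0 := Finset.sum_neg (fun i _ => ht₀ i) Finset.univ_nonempty
  set ε := δ / (2 * (1 - ∑ i, t₀ i)) with hεdef
  have hden : (0:ℝ) < 1 - ∑ i, t₀ i := by linarith
  have hε : 0 < ε := by positivity
  have hεb : ε * (-∑ i, t₀ i) ≤ δ / 2 := by
    have h1 : ε * (2 * (1 - ∑ i, t₀ i)) = δ := div_mul_cancel₀ _ (by positivity)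
    nlinarith [hε.le]
  clear_value ε
  set b : Fin n → ℝ := fun i => a i + ε with hbdef
  have hb : ∀ i, 0 < b i := fun i => add_pos_of_nonneg_of_pos (ha i) hε
  have hbs : ∀ s : Fin n → ℝ, dotp b s = dotp a s + ε * ∑ i, s i := by
    intro s
    simp only [dotp, hbdef, add_mul, Finset.sum_add_distrib, Finset.mul_sum]
  clear_value b
  set C := 1 - dotp b t₀ with hCdef
  have hbt₀ : dotp b t₀ ≤ 0 := dotp_nonpos (fun i => (hb i).le) ht₀
  have hC1 : 1 ≤ C := by simp only [hCdef]; linarith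
  clear_value C
  set K := S ∩ {s : Fin n → ℝ | -C ≤ dotp b s} with hKdef
  have ht₀K : t₀ ∈ K := ⟨⟨ht₀, ht₀1⟩, by simp only [mem_setOf_eq, hCdef]; linarith⟩
  have hbound : ∀ s ∈ K, ∀ i, -(C/ε) ≤ s i := by
    intro s hs i
    have hsneg : ∀ j, s j < 0 := hs.1.1
    have h2 : dotp b s ≤ b i * s i := by
      calc dotp b s = ∑ j, b j * s j := rfl
        _ ≤ ∑ j, (if j = i then b j * s j else 0) := by
            refine Finset.sum_le_sum fun j _ => ?_
            split
            · exact le_rfl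
            · exact mul_nonpos_of_nonneg_of_nonpos (hb j).le (hsneg j).le
        _ = b i * s i := by simp
    have h3 : -C ≤ b i * s i := le_trans hs.2 h2
    have h4 : a i * s i ≤ 0 := mul_nonpos_of_nonneg_of_nonpos (ha i) (hsneg i).le
    have h5 : b i * s i = a i * s i + ε * s i := by simp only [hbdef]; ring
    rw [show -(C/ε) = -C/ε by ring, div_le_iff₀ hε]
    linarith
  have hKsub : K ⊆ Icc (fun _ => -(C/ε)) (fun _ => (0:ℝ)) := by
    intro s hs
    rw [Set.mem_Icc]
    exact ⟨fun i => hbound s hs i, fun i => (hs.1.1 i).le⟩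
  have hKcl : IsClosed K := hScl.inter (isClosed_le continuous_const (continuous_dotp b))
  have hKcpt : IsCompact K := (isCompact_Icc).of_isClosed_subset hKcl hKsub
  set Q0 : ℝ := n * (C/ε)^2 + 1 with hQ0def
  have hQ0pos : 0 < Q0 := by positivity
  have hQ : ∀ s ∈ K, dotp s s ≤ Q0 := by
    intro s hs
    have hb2 : ∀ i, s i * s i ≤ (C/ε)^2 := by
      intro i
      have h1 := hbound s hs i
      have h2 := (hs.1.1 i).le
      nlinarith
    calc dotp s s = ∑ i, s i * s i := rfl
      _ ≤ ∑ _i : Fin n, (C/ε)^2 := Finset.sum_le_sum fun i _ => hb2 i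
      _ = n * (C/ε)^2 := by simp [Finset.sum_const, Finset.card_univ, nsmul_eq_mul]
      _ ≤ Q0 := by simp only [hQ0def]; linarith
  clear_value Q0
  set R := Q0 * (1/δ + 1) with hRdef
  have hR : 0 < R := by positivity
  have hRδ : Q0 ≤ δ * R := by
    have h1 : δ * R = Q0 + Q0 * δ := by
      rw [hRdef]; field_simp
    nlinarith [mul_pos hQ0pos hδ]
  have hR2 : Q0 < 2 * R := by
    have h1 : Q0 * (1/δ) > 0 := by positivity
    have : Q0 ≤ R := by rw [hRdef]; nlinarith
    linarith
  clear_value R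
  set Φ : (Fin n → ℝ) → ℝ := fun s => dotp s s + 2*R*dotp b s with hΦdef
  have hΦc : Continuous Φ := continuous_dotp_self.add (continuous_const.mul (continuous_dotp b))
  clear_value Φ
  obtain ⟨e, heK, hmax⟩ := hKcpt.exists_isMaxOn ⟨t₀, ht₀K⟩ hΦc.continuousOn
  have hmax' : ∀ x ∈ K, Φ x ≤ Φ e := fun x hx => hmax hx
  have hΦt₀ : dotp t₀ t₀ + 2*R*dotp b t₀ ≤ dotp e e + 2*R*dotp b e := by
    have h := hmax' t₀ ht₀K
    simp only [hΦdef] at h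
    exact h
  have he_e : dotp e e ≤ Q0 := hQ e heK
  have ht₀t₀ : 0 ≤ dotp t₀ t₀ := dotp_self_nonneg t₀
  have hkey : 2*R*(dotp b t₀ - dotp b e) ≤ Q0 := by nlinarith [hΦt₀, he_e, ht₀t₀]
  -- strict inactivity
  have hgoalA : -C < dotp b e := by
    by_contra hcon
    push_neg at hcon
    have h1 : 1 ≤ dotp b t₀ - dotp b e := by simp only [hCdef] at hcon; linarith
    nlinarith [hkey, hR2, hR]
  -- value estimate
  have h2 : dotp b t₀ - dotp b e ≤ δ/2 := by nlinarith [hkey, hRδ, hR]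
  have hsume : ∑ i, e i ≤ 0 := Finset.sum_nonpos fun i _ => (heK.1.1 i).le
  have h3 : ε * ∑ i, e i ≤ 0 := mul_nonpos_of_nonneg_of_nonpos hε.le hsume
  have hgoalB : dotp a t₀ - δ ≤ dotp a e := by
    have e1 := hbs e
    have e2 := hbs t₀
    linarith [hεb, h2, h3, e1, e2]
  refine ⟨e, ?_, hgoalB⟩
  rw [mem_extremePoints]
  refine ⟨heK.1, fun x₁ hx₁ x₂ hx₂ hseg => ?_⟩
  obtain ⟨θ₁, θ₂, hθ₁, hθ₂, hθsum, hcomb⟩ := hseg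
  set g := dotp b e + C with hgdef
  have hgpos : 0 < g := by simp only [hgdef]; linarith
  set D := |dotp b x₁ - dotp b e| + |dotp b x₂ - dotp b e| with hDdef
  have hD0 : 0 ≤ D := add_nonneg (abs_nonneg _) (abs_nonneg _)
  set μ := g / (g + D + 1) with hμdef
  have hμpos : 0 < μ := div_pos hgpos (by linarith)
  have hμle : μ ≤ 1 := by rw [hμdef, div_le_one (by linarith)]; linarith
  have hμD : μ * D < g := by
    rw [hμdef, div_mul_eq_mul_div, div_lt_iff₀ (by linarith)]
    nlinarith
  clear_value g D μ
  have hkey2 : ∀ x : Fin n → ℝ, x ∈ S → |dotp b x - dotp b e| ≤ D → e + μ • (x - e) ∈ K := by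
    intro x hxS hxD
    constructor
    · have hrw : e + μ • (x - e) = (1-μ) • e + μ • x := by
        funext i
        simp only [Pi.add_apply, Pi.smul_apply, Pi.sub_apply, smul_eq_mul]
        ring
      rw [hrw]
      exact hSconv heK.1 hxS (by linarith) hμpos.le (by ring)
    · have hlin : dotp b (e + μ • (x - e)) = dotp b e + μ * (dotp b x - dotp b e) := by
        rw [dotp_add, dotp_smul, dotp_sub]
      simp only [mem_setOf_eq, hlin]
      have habs : -(μ * |dotp b x - dotp b e|) ≤ μ * (dotp b x - dotp b e) := by
        have h7 := neg_abs_le (dotp b x - dotp b e)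
        nlinarith [hμpos.le]
      have h5 : μ * |dotp b x - dotp b e| ≤ μ * D := mul_le_mul_of_nonneg_left hxD hμpos.le
      have h6 : μ * D < g := hμD
      simp only [hgdef] at h6 ⊢
      linarith
  set x₁' := e + μ • (x₁ - e) with hx₁'def
  set x₂' := e + μ • (x₂ - e) with hx₂'def
  have hx₁K : x₁' ∈ K := hkey2 x₁ hx₁ (by rw [hDdef]; exact le_add_of_nonneg_right (abs_nonneg _))
  have hx₂K : x₂' ∈ K := hkey2 x₂ hx₂ (by rw [hDdef]; exact le_add_of_nonneg_left (abs_nonneg _))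
  have hcomb' : θ₁ • x₁' + θ₂ • x₂' = e := by
    funext i
    have hc := congrFun hcomb i
    simp only [Pi.add_apply, Pi.smul_apply, Pi.sub_apply, smul_eq_mul] at hc ⊢
    simp only [hx₁'def, hx₂'def, Pi.add_apply, Pi.smul_apply, Pi.sub_apply, smul_eq_mul]
    linear_combination (1 - μ) * e i * hθsum + μ * hc
  have hquad : Φ e = θ₁ * Φ x₁' + θ₂ * Φ x₂' - θ₁*θ₂*dotp (x₁'-x₂') (x₁'-x₂') := by
    conv_lhs => rw [← hcomb']
    simp only [hΦdef]
    rw [quad_id θ₁ θ₂ hθsum, dotp_combo]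
    ring
  have hd : 0 ≤ dotp (x₁'-x₂') (x₁'-x₂') := dotp_self_nonneg _
  have h3' : θ₁ * Φ x₁' ≤ θ₁ * Φ e := mul_le_mul_of_nonneg_left (hmax' _ hx₁K) hθ₁.le
  have h4' : θ₂ * Φ x₂' ≤ θ₂ * Φ e := mul_le_mul_of_nonneg_left (hmax' _ hx₂K) hθ₂.le
  have h5' : θ₁ * Φ e + θ₂ * Φ e = Φ e := by rw [← add_mul, hθsum, one_mul]
  have hP : θ₁*θ₂*dotp (x₁'-x₂') (x₁'-x₂') ≤ 0 := by linarith
  have hd0 : dotp (x₁'-x₂') (x₁'-x₂') = 0 := by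
    refine le_antisymm ?_ hd
    nlinarith [mul_pos hθ₁ hθ₂]
  have hxx : x₁' = x₂' := sub_eq_zero.1 (dotp_self_eq_zero hd0)
  have hx12 : x₁ = x₂ := by
    funext i
    have hc := congrFun hxx i
    simp only [hx₁'def, hx₂'def, Pi.add_apply, Pi.smul_apply, Pi.sub_apply, smul_eq_mul] at hc
    have h8 : μ * (x₁ i - e i) = μ * (x₂ i - e i) := by linarith
    have h9 := mul_left_cancel₀ hμpos.ne' h8
    linarith
  have he1 : x₁ = e := by
    funext i
    rw [← hx12] at hcomb
    have hc := congrFun hcomb i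
    simp only [Pi.add_apply, Pi.smul_apply, smul_eq_mul] at hc
    linear_combination hc - x₁ i * hθsum
  exact ⟨he1, hx12 ▸ he1⟩


lemma extremePoints_subset_levelL {n : ℕ} (hn : 1 ≤ n) {f : (Fin n → ℝ) → ℝ}
    (hf : IsIndicatorProfile f) :
    Set.extremePoints ℝ {t ∈ negOrth n | f t ≤ -1} ⊆ levelL f := by
  intro t ht
  have htS : t ∈ {t ∈ negOrth n | f t ≤ -1} := extremePoints_subset ht
  refine ⟨htS.1, ?_⟩
  by_contra hne
  have hlt : f t < -1 := lt_of_le_of_ne htS.2 hne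
  set i0 : Fin n := ⟨0, hn⟩ with hi0
  set η := -1 - f t with hηdef
  have hηpos : 0 < η := by simp only [hηdef]; linarith
  set lam0 := -(t i0) / 2 with hlam0def
  have hti0 : t i0 < 0 := htS.1 i0
  have hlam0pos : 0 < lam0 := by simp only [hlam0def]; linarith
  set r := η / (1 + η) with hrdef
  have hr0 : 0 < r := by positivity
  have hr1 : r < 1 := by rw [hrdef, div_lt_one (by linarith)]; linarith
  set lam := r * lam0 with hlamdef
  have hlam0 : 0 < lam := mul_pos hr0 hlam0pos
  have hlamlt : lam < lam0 := by
    rw [hlamdef]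
    nlinarith
  set e0 : Fin n → ℝ := fun j => if j = i0 then (1:ℝ) else 0 with he0def
  have he0i0 : e0 i0 = 1 := by simp [he0def]
  have he0ne : ∀ j, j ≠ i0 → e0 j = 0 := fun j hj => by simp [he0def, hj]
  have hcoord2 : ∀ (c : ℝ), 0 < c → c ≤ lam0 → (t + c • e0 ∈ negOrth n) ∧ (t - c • e0 ∈ negOrth n) := by
    intro c hc hcle
    constructor <;> intro j <;>
      simp only [Pi.add_apply, Pi.sub_apply, Pi.smul_apply, smul_eq_mul] <;>
      by_cases hj : j = i0
    · subst hj; rw [he0i0]; simp only [hlam0def] at hcle; linarith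
    · rw [he0ne j hj]; simpa using htS.1 j
    · subst hj; rw [he0i0]; linarith
    · rw [he0ne j hj]; simpa using htS.1 j
  obtain ⟨hpP, hpM⟩ := hcoord2 lam0 hlam0pos le_rfl
  obtain ⟨hxPmem, hxMmem⟩ := hcoord2 lam hlam0 hlamlt.le
  have hrcomb : (1 - r) * f t ≤ -1 := by
    have h1 : (1 - r) * (1 + η) = 1 := by rw [hrdef]; field_simp; ring
    nlinarith [h1]
  have hfxP : f (t + lam • e0) ≤ -1 := by
    have hrw : t + lam • e0 = (1 - r) • t + r • (t + lam0 • e0) := by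
      funext j
      simp only [Pi.add_apply, Pi.smul_apply, smul_eq_mul, hlamdef]
      ring
    rw [hrw]
    have hcvx := hf.1.2 htS.1 hpP (by linarith : (0:ℝ) ≤ 1 - r) hr0.le (by ring)
    simp only [smul_eq_mul] at hcvx
    have hnp := hf.2.1 _ hpP
    have hprod : r * f (t + lam0 • e0) ≤ 0 :=
      mul_nonpos_of_nonneg_of_nonpos hr0.le hnp
    linarith
  have hfxM : f (t - lam • e0) ≤ -1 := by
    have hrw : t - lam • e0 = (1 - r) • t + r • (t - lam0 • e0) := by
      funext j
      simp only [Pi.add_apply, Pi.sub_apply, Pi.smul_apply, smul_eq_mul, hlamdef]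
      ring
    rw [hrw]
    have hcvx := hf.1.2 htS.1 hpM (by linarith : (0:ℝ) ≤ 1 - r) hr0.le (by ring)
    simp only [smul_eq_mul] at hcvx
    have hnp := hf.2.1 _ hpM
    have hprod : r * f (t - lam0 • e0) ≤ 0 :=
      mul_nonpos_of_nonneg_of_nonpos hr0.le hnp
    linarith
  have hseg : t ∈ openSegment ℝ (t - lam • e0) (t + lam • e0) := by
    refine ⟨1/2, 1/2, by norm_num, by norm_num, by norm_num, ?_⟩
    funext j
    simp only [Pi.add_apply, Pi.sub_apply, Pi.smul_apply, smul_eq_mul]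
    ring
  have hcontra := ht.2 ⟨hxMmem, hfxM⟩ ⟨hxPmem, hfxP⟩ hseg
  have hcoord := congrFun hcontra i0
  simp only [Pi.sub_apply, Pi.smul_apply, he0i0, smul_eq_mul, mul_one] at hcoord
  linarith

end aux

/-- The key identity in the proof of Proposition 3: for a coercive indicator
profile, the supremum of `⟨a,·⟩` over the level set `L` equals its supremum
over the set `E` of extreme points of `S = {f ≤ −1}`; consequently
`Γ_L = Γ_E` and `Θ_L = Θ_E`. -/
theorem sup_levelL_eq_sup_extremePoints (n : ℕ) (hn : 1 ≤ n)
    (f : (Fin n → ℝ) → ℝ) (hf : IsIndicatorProfile f)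
    (A : ℝ) (hA : 0 < A)
    (hcoer : ∀ t ∈ negOrth n, A * (⨆ i, t i) ≤ f t) :
    (∀ a : Fin n → ℝ, (∀ i, 0 ≤ a i) →
        sSup ((fun t => dotp a t) '' levelL f) =
          sSup ((fun t => dotp a t) ''
            Set.extremePoints ℝ {t ∈ negOrth n | f t ≤ -1})) ∧
    GammaSet f (levelL f)
      = GammaSet f (Set.extremePoints ℝ {t ∈ negOrth n | f t ≤ -1}) ∧
    ThetaSet f (levelL f)
      = ThetaSet f (Set.extremePoints ℝ {t ∈ negOrth n | f t ≤ -1}) := by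
  have part1 : ∀ a : Fin n → ℝ, (∀ i, 0 ≤ a i) →
      sSup ((fun t => dotp a t) '' levelL f) =
        sSup ((fun t => dotp a t) ''
          Set.extremePoints ℝ {t ∈ negOrth n | f t ≤ -1}) := by
    intro a ha
    by_cases hL : (levelL f).Nonempty
    · obtain ⟨t₀, ht₀⟩ := hL
      have hEne : (Set.extremePoints ℝ {t ∈ negOrth n | f t ≤ -1}).Nonempty := by
        obtain ⟨e, he, -⟩ := key_lemma hn hf hA hcoer ha ht₀.1 (le_of_eq ht₀.2) one_pos
        exact ⟨e, he⟩
      have hbddL : BddAbove ((fun t => dotp a t) '' levelL f) := by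
        refine ⟨0, ?_⟩
        rintro _ ⟨t, ht, rfl⟩
        exact dotp_nonpos ha ht.1
      have hbddE : BddAbove ((fun t => dotp a t) ''
          Set.extremePoints ℝ {t ∈ negOrth n | f t ≤ -1}) := by
        refine ⟨0, ?_⟩
        rintro _ ⟨e, he, rfl⟩
        exact dotp_nonpos ha (extremePoints_subset he).1
      apply le_antisymm
      · refine csSup_le (Set.Nonempty.image _ ⟨t₀, ht₀⟩) ?_
        rintro _ ⟨t, ht, rfl⟩
        refine le_of_forall_sub_le ?_
        intro δ hδ
        obtain ⟨e, heE, hle⟩ := key_lemma hn hf hA hcoer ha ht.1 (le_of_eq ht.2) hδ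
        exact le_trans hle (le_csSup hbddE ⟨e, heE, rfl⟩)
      · exact csSup_le_csSup hbddL (hEne.image _)
          (Set.image_mono (extremePoints_subset_levelL hn hf))
    · have hLempty : levelL f = ∅ := Set.not_nonempty_iff_eq_empty.1 hL
      have hSempty : {t ∈ negOrth n | f t ≤ -1} = ∅ := by
        rw [Set.eq_empty_iff_forall_notMem]
        rintro t ⟨htn, ht1⟩
        have hft : f t < 0 := lt_of_le_of_lt ht1 (by norm_num)
        have hc : (0:ℝ) < (-f t)⁻¹ := inv_pos.2 (by linarith)
        have hmem : (-f t)⁻¹ • t ∈ negOrth n := by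
          intro i
          simp only [Pi.smul_apply, smul_eq_mul]
          exact mul_neg_of_pos_of_neg hc (htn i)
        have hfc : f ((-f t)⁻¹ • t) = (-f t)⁻¹ * f t := hf.2.2.2 _ hc t htn
        have hmem2 : (-f t)⁻¹ • t ∈ levelL f := by
          refine ⟨hmem, ?_⟩
          rw [hfc]
          have hne : f t ≠ 0 := ne_of_lt hft
          field_simp
        rw [hLempty] at hmem2
        exact hmem2
      rw [hLempty, hSempty, extremePoints_empty]
  refine ⟨part1, ?_, ?_⟩
  · ext x
    simp only [GammaSet, Set.mem_setOf_eq]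
    constructor
    · rintro ⟨hx, h2, h3⟩
      exact ⟨hx, by rw [← part1 x hx]; exact h3, h3⟩
    · rintro ⟨hx, h2, h3⟩
      exact ⟨hx, h3, h3⟩
  · have hGamma : GammaSet f (levelL f)
        = GammaSet f (Set.extremePoints ℝ {t ∈ negOrth n | f t ≤ -1}) := by
      ext x
      simp only [GammaSet, Set.mem_setOf_eq]
      constructor
      · rintro ⟨hx, h2, h3⟩
        exact ⟨hx, by rw [← part1 x hx]; exact h3, h3⟩
      · rintro ⟨hx, h2, h3⟩
        exact ⟨hx, h3, h3⟩
    unfold ThetaSet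
    rw [hGamma]
end

section
/- Let f : ℝ₋ⁿ → ℝ be an indicator profile which is not identically zero. Then f(t) < 0 for every t ∈ ℝ₋ⁿ, the level set L = {t ∈ ℝ₋ⁿ : f(t) = −1} is nonempty, and f(t) = sup{ ⟨a, t⟩ : a ∈ Γ_L } for every t ∈ ℝ₋ⁿ; that is, f is the restriction to ℝ₋ⁿ of the supporting function of the set Γ_L. (This is the assertion in Section 4 of the paper that f is the restriction to ℝ₋ⁿ of the supporting function of Γ_{L^Φ}^Φ; for Φ the indicator of log|g| with g holomorphic, Γ_L is the Newton diagram of g at 0.) -/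
open Set

-- basic facts
lemma negOrth_open (n : ℕ) : IsOpen (negOrth n) := by
  have : negOrth n = ⋂ i, (fun t : Fin n → ℝ => t i) ⁻¹' Iio 0 := by
    ext t; simp [negOrth]
  rw [this]
  exact isOpen_iInter_of_finite fun i => (continuous_apply i).isOpen_preimage _ isOpen_Iio

lemma negOrth_nonempty (n : ℕ) : (negOrth n).Nonempty :=
  ⟨fun _ => -1, fun _ => by norm_num⟩

lemma smul_mem_negOrth {n : ℕ} {t : Fin n → ℝ} (ht : t ∈ negOrth n) {c : ℝ} (hc : 0 < c) :
    c • t ∈ negOrth n := fun i => mul_neg_of_pos_of_neg hc (ht i)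

lemma dotp_smul_s8 {n : ℕ} (a : Fin n → ℝ) (c : ℝ) (t : Fin n → ℝ) :
    dotp a (c • t) = c * dotp a t := by
  simp only [dotp, Pi.smul_apply, smul_eq_mul, Finset.mul_sum]
  congr 1; ext i; ring

-- bddAbove/nonempty from sSup = -1
lemma bdd_of_sSup_eq {D : Set ℝ} (h : sSup D = -1) : D.Nonempty ∧ BddAbove D := by
  constructor
  · rcases D.eq_empty_or_nonempty with rfl | hne
    · simp [Real.sSup_empty] at h
    · exact hne
  · by_contra hb
    rw [Real.sSup_of_not_bddAbove hb] at h; norm_num at h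

-- sSup of scaled set
lemma sSup_mul_image {D : Set ℝ} (hne : D.Nonempty) (hbdd : BddAbove D) {c : ℝ} (hc : 0 < c) :
    sSup ((fun x => c * x) '' D) = c * sSup D := by
  have hlub := isLUB_csSup hne hbdd
  have : IsLUB ((fun x => c * x) '' D) (c * sSup D) := by
    constructor
    · rintro _ ⟨x, hx, rfl⟩
      exact mul_le_mul_of_nonneg_left (hlub.1 hx) hc.le
    · intro b hb
      rw [mul_comm, ← le_div_iff₀ hc]
      refine csSup_le hne fun x hx => ?_
      rw [le_div_iff₀ hc, mul_comm]
      exact hb ⟨x, hx, rfl⟩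
  exact this.csSup_eq (hne.image _)

lemma exists_approx_subgradient {n : ℕ} {f : (Fin n → ℝ) → ℝ}
    (hconv : ConvexOn ℝ (negOrth n) f)
    (hnonpos : ∀ t ∈ negOrth n, f t ≤ 0)
    (hhom : ∀ c : ℝ, 0 < c → ∀ t ∈ negOrth n, f (c • t) = c * f t)
    {t : Fin n → ℝ} (ht : t ∈ negOrth n) {ε : ℝ} (hε : 0 < ε) :
    ∃ a : Fin n → ℝ, (∀ s ∈ negOrth n, dotp a s ≤ f s) ∧ f t - ε < dotp a t := by
  -- continuity of f on the open set negOrth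
  have hcont : ContinuousOn f (negOrth n) := by
    have htfae := hconv.continuousOn_tfae (negOrth_open n) (negOrth_nonempty n)
    have hb : Filter.IsBoundedUnder (· ≤ ·) (nhds t) f := ⟨0, by
      rw [Filter.eventually_map]
      exact Filter.eventually_of_mem ((negOrth_open n).mem_nhds ht) hnonpos⟩
    have himp := htfae.out 3 1
    exact himp.mp ⟨t, ht, hb⟩
  -- the epigraph and its closure
  set Epi : Set ((Fin n → ℝ) × ℝ) := {p | p.1 ∈ negOrth n ∧ f p.1 ≤ p.2} with hEpi
  have hEpiConv : Convex ℝ Epi := hconv.convex_epigraph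
  -- the point to separate
  set p : (Fin n → ℝ) × ℝ := (t, f t - ε) with hp
  have hpnot : p ∉ closure Epi := by
    intro hmem
    have hev : {s : Fin n → ℝ | f t - ε / 2 < f s} ∈ nhds t := by
      have hCt : ContinuousAt f t := hcont.continuousAt ((negOrth_open n).mem_nhds ht)
      exact hCt (eventually_gt_nhds (by linarith) : ∀ᶠ y in nhds (f t), f t - ε/2 < y)
    have hU : {s : Fin n → ℝ | f t - ε / 2 < f s} ×ˢ Iio (f t - ε / 2) ∈ nhds p := by
      refine prod_mem_nhds hev (Iio_mem_nhds ?_)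
      show f t - ε < f t - ε / 2; linarith
    obtain ⟨q, hq1, hq2⟩ := mem_closure_iff_nhds.1 hmem _ hU
    have h1 : f t - ε / 2 < f q.1 := hq1.1
    have h2 : q.2 < f t - ε / 2 := hq1.2
    have h3 : f q.1 ≤ q.2 := hq2.2
    linarith
  -- separate p from the closure of the epigraph
  obtain ⟨L, u, hpu, hsep⟩ :=
    geometric_hahn_banach_point_closed hEpiConv.closure isClosed_closure hpnot
  have hsep' : ∀ q ∈ Epi, u < L q := fun q hq => hsep q (subset_closure hq)
  set β : ℝ := L (0, 1) with hβdef
  set b : Fin n → ℝ := fun i => L ((fun j => if i = j then 1 else 0 : Fin n → ℝ), 0) with hbdef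
  have hdecomp : ∀ s : Fin n → ℝ, ∀ y : ℝ, L (s, y) = (∑ i, s i * b i) + y * β := by
    intro s y
    have h1 : ((s, y) : (Fin n → ℝ) × ℝ) =
        (∑ i, s i • (((fun j => if i = j then 1 else 0 : Fin n → ℝ)), (0:ℝ)))
          + y • (((0 : Fin n → ℝ), (1:ℝ))) := by
      apply Prod.ext
      · simp only [Prod.fst_add, Prod.fst_sum, Prod.smul_fst, Prod.smul_snd, smul_eq_mul,
          smul_zero, add_zero]
        exact pi_eq_sum_univ s
      · simp [Prod.snd_sum]
    rw [h1, map_add, map_sum, map_smul]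
    simp only [map_smul, smul_eq_mul]
    rfl
  have hkey : ∀ s ∈ negOrth n, u < (∑ i, s i * b i) + f s * β := by
    intro s hs
    have h := hsep' (s, f s) ⟨hs, le_refl _⟩
    rwa [hdecomp] at h
  have hβ0 : 0 ≤ β := by
    by_contra hneg
    push_neg at hneg
    set G := ∑ i, t i * b i with hG
    have h0 : u < G + f t * β := hkey t ht
    set k : ℝ := (u - G - f t * β) / β with hk
    have hk0 : 0 ≤ k := by
      rw [hk]
      exact div_nonneg_iff.2 (Or.inr ⟨by linarith, hneg.le⟩)
    have hmem : (t, f t + k) ∈ Epi := ⟨ht, by show f t ≤ f t + k; linarith⟩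
    have h2 := hsep' _ hmem
    rw [hdecomp] at h2
    have hkβ : k * β = u - G - f t * β := by
      rw [hk, div_mul_cancel₀ _ (ne_of_lt hneg)]
    have hexp : (f t + k) * β = f t * β + k * β := by ring
    rw [hexp, hkβ] at h2
    linarith
  have hβpos : 0 < β := by
    rcases hβ0.lt_or_eq with h | h
    · exact h
    · exfalso
      have h1 := hkey t ht
      have h2 : L (t, f t - ε) < u := by rw [hp] at hpu; exact hpu
      rw [hdecomp] at h2
      rw [← h] at h1 h2
      simp only [mul_zero, add_zero] at h1 h2
      linarith
  set a : Fin n → ℝ := fun i => -(b i) / β with ha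
  have hdot : ∀ s : Fin n → ℝ, β * dotp a s = -(∑ i, s i * b i) := by
    intro s
    rw [dotp, Finset.mul_sum, ← Finset.sum_neg_distrib]
    refine Finset.sum_congr rfl fun i _ => ?_
    rw [ha]
    field_simp
  have hmul : ∀ s ∈ negOrth n, ∀ l : ℝ, 0 < l → u < l * ((∑ i, s i * b i) + f s * β) := by
    intro s hs l hl
    have h1 := hkey (l • s) (smul_mem_negOrth hs hl)
    rw [hhom l hl s hs] at h1
    have h2 : ∑ i, (l • s) i * b i = l * ∑ i, s i * b i := by
      rw [Finset.mul_sum]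
      exact Finset.sum_congr rfl fun i _ => by simp [Pi.smul_apply]; ring
    rw [h2] at h1
    calc u < l * (∑ i, s i * b i) + l * f s * β := h1
    _ = l * ((∑ i, s i * b i) + f s * β) := by ring
  have hmain : ∀ s ∈ negOrth n, dotp a s ≤ f s := by
    intro s hs
    refine le_of_forall_sub_le fun δ hδ => ?_
    set G := ∑ i, s i * b i with hG
    set l : ℝ := max 1 (|u| / (β * δ)) with hl
    have hl1 : (0:ℝ) < l := lt_of_lt_of_le one_pos (le_max_left _ _)
    have hlu : |u| ≤ l * (β * δ) := by
      have h2 : |u| / (β * δ) ≤ l := le_max_right _ _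
      have hbd : (0:ℝ) < β * δ := mul_pos hβpos hδ
      calc |u| = |u| / (β * δ) * (β * δ) := by field_simp
      _ ≤ l * (β * δ) := mul_le_mul_of_nonneg_right h2 hbd.le
    have h1 := hmul s hs l hl1
    have h3 : 0 < l * (G + f s * β + β * δ) := by nlinarith [neg_abs_le u]
    have h4 : 0 < G + f s * β + β * δ := by
      by_contra h
      push_neg at h
      nlinarith
    have h5 : β * dotp a s = -G := hdot s
    have h6 : β * dotp a s < β * (f s + δ) := by nlinarith
    have h7 := (mul_lt_mul_iff_right₀ hβpos).mp h6
    linarith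
  have hu0 : u ≤ 0 := by
    by_contra h
    push_neg at h
    set C := (∑ i, t i * b i) + f t * β with hC
    rcases le_or_gt C 0 with hCle | hCpos
    · have h1 := hmul t ht 1 one_pos
      nlinarith
    · have h1 := hmul t ht (u / (2 * C)) (by positivity)
      have h2 : u / (2 * C) * C = u / 2 := by field_simp
      rw [h2] at h1
      linarith
  rw [hp] at hpu
  rw [hdecomp] at hpu
  have h5 : β * dotp a t = -(∑ i, t i * b i) := hdot t
  have h6 : β * (f t - ε) < β * dotp a t := by nlinarith
  have h7 := (mul_lt_mul_iff_right₀ hβpos).mp h6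
  exact ⟨a, hmain, h7⟩

lemma subgradient_nonneg {n : ℕ} {f : (Fin n → ℝ) → ℝ}
    (hnonpos : ∀ t ∈ negOrth n, f t ≤ 0)
    {a : Fin n → ℝ} (hsub : ∀ s ∈ negOrth n, dotp a s ≤ f s) :
    ∀ i, 0 ≤ a i := by
  intro i
  by_contra h
  push_neg at h
  set A := ∑ j, |a j| with hA
  set M : ℝ := max 1 ((A + 1) / (-a i)) with hM
  have hM0 : (0:ℝ) < M := lt_of_lt_of_le one_pos (le_max_left _ _)
  set s : Fin n → ℝ := fun j => if j = i then -M else -1 with hs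
  have hsmem : s ∈ negOrth n := by
    intro j
    rw [hs]
    by_cases hj : j = i <;> simp [hj] <;> linarith
  have hMbig : A + 1 ≤ (-a i) * M := by
    have h1 : (A + 1) / (-a i) ≤ M := le_max_right _ _
    have h2 : (0:ℝ) < -a i := by linarith
    calc A + 1 = (A + 1) / (-a i) * (-a i) := (div_mul_cancel₀ _ (ne_of_gt h2)).symm
    _ ≤ M * (-a i) := mul_le_mul_of_nonneg_right h1 h2.le
    _ = (-a i) * M := mul_comm _ _
  have hsum : dotp a s = a i * (-M) + ∑ j ∈ Finset.univ.erase i, a j * (-1) := by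
    rw [dotp, ← Finset.add_sum_erase _ _ (Finset.mem_univ i)]
    congr 1
    · rw [hs]; simp
    · refine Finset.sum_congr rfl fun j hj => ?_
      rw [hs]; simp [Finset.ne_of_mem_erase hj]
  have hbound : ∑ j ∈ Finset.univ.erase i, a j * (-1) ≥ -A := by
    have h1 : ∑ j ∈ Finset.univ.erase i, a j ≤ A := by
      calc ∑ j ∈ Finset.univ.erase i, a j ≤ ∑ j ∈ Finset.univ.erase i, |a j| :=
        Finset.sum_le_sum fun j _ => le_abs_self _
      _ ≤ A := Finset.sum_le_sum_of_subset_of_nonneg (Finset.subset_univ _)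
          (fun j _ _ => abs_nonneg _)
    have h2 : ∑ j ∈ Finset.univ.erase i, a j * (-1) = -(∑ j ∈ Finset.univ.erase i, a j) := by
      rw [← Finset.sum_neg_distrib]
      exact Finset.sum_congr rfl fun j _ => by ring
    linarith
  have h3 := hsub s hsmem
  have h4 := hnonpos s hsmem
  have h5 : a i * (-M) = (-a i) * M * 1 := by ring
  nlinarith

lemma dotp_smul_left {n : ℕ} (c : ℝ) (a t : Fin n → ℝ) :
    dotp (c • a) t = c * dotp a t := by
  simp only [dotp, Pi.smul_apply, smul_eq_mul, Finset.mul_sum]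
  exact Finset.sum_congr rfl fun i _ => by ring

theorem aux_main (n : ℕ) (hn : 1 ≤ n)
    (f : (Fin n → ℝ) → ℝ)
    (hconv : ConvexOn ℝ (negOrth n) f)
    (hnonpos : ∀ t ∈ negOrth n, f t ≤ 0)
    (hmono : ∀ s ∈ negOrth n, ∀ t ∈ negOrth n, (∀ i, s i ≤ t i) → f s ≤ f t)
    (hhom : ∀ c : ℝ, 0 < c → ∀ t ∈ negOrth n, f (c • t) = c * f t)
    (hne : ∃ t ∈ negOrth n, f t ≠ 0) :
    (∀ t ∈ negOrth n, f t < 0) ∧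
    (levelL f).Nonempty ∧
    ∀ t ∈ negOrth n,
      f t = sSup ((fun a => dotp a t) ''
        {a : Fin n → ℝ | (∀ i, 0 ≤ a i) ∧
          sSup ((fun s => dotp a s) '' levelL f) = -1}) := by
  have hinst : Nonempty (Fin n) := ⟨⟨0, hn⟩⟩
  obtain ⟨t₀, ht₀, hft₀⟩ := hne
  have hft₀' : f t₀ < 0 := lt_of_le_of_ne (hnonpos t₀ ht₀) hft₀
  -- Part 1
  have hneg : ∀ t ∈ negOrth n, f t < 0 := by
    intro t ht
    set c : ℝ := Finset.univ.inf' Finset.univ_nonempty (fun i => t i / t₀ i) with hc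
    have hcpos : 0 < c := by
      rw [hc, Finset.lt_inf'_iff]
      exact fun i _ => div_pos_iff.2 (Or.inr ⟨ht i, ht₀ i⟩)
    have hle : ∀ i, t i ≤ c * t₀ i := by
      intro i
      have h1 : c ≤ t i / t₀ i := Finset.inf'_le _ (Finset.mem_univ i)
      exact ((le_div_iff_of_neg (ht₀ i)).1 h1)
    calc f t ≤ f (c • t₀) := hmono t ht (c • t₀) (smul_mem_negOrth ht₀ hcpos) hle
    _ = c * f t₀ := hhom c hcpos t₀ ht₀
    _ < 0 := mul_neg_of_pos_of_neg hcpos hft₀'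
  -- scaling into the level set
  have hscale : ∀ t ∈ negOrth n, (-(f t))⁻¹ • t ∈ levelL f := by
    intro t ht
    have hft := hneg t ht
    have h2 : (0:ℝ) < -f t := by linarith
    have hcpos : (0:ℝ) < (-(f t))⁻¹ := inv_pos.2 h2
    refine ⟨smul_mem_negOrth ht hcpos, ?_⟩
    rw [hhom _ hcpos t ht, inv_neg, neg_mul, inv_mul_cancel₀ (ne_of_lt hft)]
  have hL : (levelL f).Nonempty := ⟨_, hscale t₀ ht₀⟩
  refine ⟨hneg, hL, ?_⟩
  -- Part 3
  intro t ht
  have hft := hneg t ht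
  have h2 : (0:ℝ) < -f t := by linarith
  set T := ((fun a => dotp a t) '' {a : Fin n → ℝ | (∀ i, 0 ≤ a i) ∧
      sSup ((fun s => dotp a s) '' levelL f) = -1}) with hT
  have hub : ∀ x ∈ T, x ≤ f t := by
    rintro _ ⟨a, ⟨hapos, hasup⟩, rfl⟩
    obtain ⟨hDne, hDbdd⟩ := bdd_of_sSup_eq hasup
    have hst := hscale t ht
    have h1 : dotp a ((-(f t))⁻¹ • t) ≤ -1 := by
      rw [← hasup]
      exact le_csSup hDbdd ⟨_, hst, rfl⟩
    rw [dotp_smul_s8] at h1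
    have h3 : (-f t) * ((-(f t))⁻¹ * dotp a t) ≤ (-f t) * (-1) :=
      mul_le_mul_of_nonneg_left h1 h2.le
    rw [← mul_assoc, mul_inv_cancel₀ (ne_of_gt h2), one_mul] at h3
    linarith
  have happrox : ∀ ε : ℝ, 0 < ε → ∃ x ∈ T, f t - ε < x := by
    intro ε hε
    obtain ⟨a, hsub, hat⟩ := exists_approx_subgradient hconv hnonpos hhom ht hε
    have hapos := subgradient_nonneg hnonpos hsub
    set D := (fun s => dotp a s) '' levelL f with hD
    have hDne : D.Nonempty := hL.image _
    have hDbdd : BddAbove D := by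
      refine ⟨-1, ?_⟩
      rintro _ ⟨s, ⟨hs1, hs2⟩, rfl⟩
      calc dotp a s ≤ f s := hsub s hs1
      _ = -1 := hs2
    set m := sSup D with hm
    have hm1 : m ≤ -1 := by
      refine csSup_le hDne ?_
      rintro _ ⟨s, ⟨hs1, hs2⟩, rfl⟩
      calc dotp a s ≤ f s := hsub s hs1
      _ = -1 := hs2
    have hmneg : m < 0 := lt_of_le_of_lt hm1 (by norm_num)
    have hcpos : (0:ℝ) < (-m)⁻¹ := inv_pos.2 (by linarith)
    refine ⟨dotp ((-m)⁻¹ • a) t, ⟨(-m)⁻¹ • a, ⟨?_, ?_⟩, rfl⟩, ?_⟩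
    · intro i
      simp only [Pi.smul_apply, smul_eq_mul]
      exact mul_nonneg hcpos.le (hapos i)
    · have himg : (fun s => dotp ((-m)⁻¹ • a) s) '' levelL f = (fun x => (-m)⁻¹ * x) '' D := by
        rw [hD, Set.image_image]
        exact Set.image_congr fun s _ => dotp_smul_left _ _ _
      rw [himg, sSup_mul_image hDne hDbdd hcpos, ← hm, inv_neg, neg_mul,
        inv_mul_cancel₀ (ne_of_lt hmneg)]
    · rw [dotp_smul_left]
      have hdatle : dotp a t ≤ f t := hsub t ht
      have hm2 : (1:ℝ) ≤ -m := by linarith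
      have hc1 : (-m)⁻¹ ≤ 1 := by
        rw [inv_le_one_iff₀]
        right; exact hm2
      nlinarith [mul_nonneg (by linarith : (0:ℝ) ≤ 1 - (-m)⁻¹) (by linarith : (0:ℝ) ≤ -(dotp a t))]
  have hTne : T.Nonempty := by
    obtain ⟨x, hx, _⟩ := happrox 1 one_pos
    exact ⟨x, hx⟩
  have hTbdd : BddAbove T := ⟨f t, fun x hx => hub x hx⟩
  refine le_antisymm ?_ (csSup_le hTne hub)
  refine le_of_forall_sub_le fun ε hε => ?_
  obtain ⟨x, hxT, hx⟩ := happrox ε hε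
  exact le_trans (le_of_lt hx) (le_csSup hTbdd hxT)


/-- An indicator profile not identically zero is strictly negative on `ℝ₋ⁿ`,
its level set `L = {f = −1}` is nonempty, and `f` is the restriction to `ℝ₋ⁿ`
of the supporting function of `Γ_L = {a ∈ ℝ₊ⁿ : sup_{t∈L} ⟨a,t⟩ = −1}`:
`f(t) = sup{⟨a,t⟩ : a ∈ Γ_L}`. -/
theorem indicator_profile_supporting_function (n : ℕ) (hn : 1 ≤ n)
    (f : (Fin n → ℝ) → ℝ) (hf : IsIndicatorProfile f)
    (hne : ∃ t ∈ negOrth n, f t ≠ 0) :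
    (∀ t ∈ negOrth n, f t < 0) ∧
    (levelL f).Nonempty ∧
    ∀ t ∈ negOrth n,
      f t = sSup ((fun a => dotp a t) ''
        {a : Fin n → ℝ | (∀ i, 0 ≤ a i) ∧
          sSup ((fun s => dotp a s) '' levelL f) = -1}) := by
  obtain ⟨hconv, hnonpos, hmono, hhom⟩ := hf
  exact aux_main n hn f hconv hnonpos hmono hhom hne
end
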